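/- Let T > 0, l ∈ [0,1), and integers n_c, n_t ≥ 1. Define α(τ) = Tτ/(1+Tτ), γ(τ) = l + (1−l)(1 − exp(−12τ)), and δ(α,γ) = α^{n_c} Σ_{k=0}^{n_t−1} r^k + r^{n_t} with r = γ(1 − α^{n_c}). Then the composite function τ ↦ δ(α(τ), γ(τ)) is monotonically nondecreasing on the set of τ ≥ 0 for which α(τ)^{n_c} ≤ 1/n_t and γ(τ)^{n_t} ≤ 1/n_t. -/

import Mathlib

lemma stmt7_derivB (γ : ℝ) (nt : ℕ) (a : ℝ) :
    HasDerivAt (fun a : ℝ => a * ∑ k ∈ Finset.range nt, (γ * (1 - a)) ^ k + (γ * (1 - a)) ^ nt)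
      ((1 * ∑ k ∈ Finset.range nt, (γ * (1 - a)) ^ k +
          a * ∑ k ∈ Finset.range nt, (k : ℝ) * (γ * (1 - a)) ^ (k - 1) * (-γ)) +
        (nt : ℝ) * (γ * (1 - a)) ^ (nt - 1) * (-γ)) a := by
  have hr : HasDerivAt (fun a : ℝ => γ * (1 - a)) (-γ) a := by
    have := ((hasDerivAt_const a (1 : ℝ)).sub (hasDerivAt_id a)).const_mul γ
    simpa using this
  have hsum : HasDerivAt (fun a : ℝ => ∑ k ∈ Finset.range nt, (γ * (1 - a)) ^ k)
      (∑ k ∈ Finset.range nt, (k : ℝ) * (γ * (1 - a)) ^ (k - 1) * (-γ)) a :=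
    HasDerivAt.fun_sum (fun k _ => hr.pow k)
  exact ((hasDerivAt_id a).mul hsum).add (hr.pow nt)

lemma stmt7_lemB (γ : ℝ) (nt : ℕ) (hnt : 1 ≤ nt) (hγ0 : 0 ≤ γ) (hγ : γ ^ nt ≤ 1 / nt) :
    MonotoneOn (fun a : ℝ => a * ∑ k ∈ Finset.range nt, (γ * (1 - a)) ^ k + (γ * (1 - a)) ^ nt)
      (Set.Icc 0 (1 / (nt : ℝ))) := by
  have hntpos : (0 : ℝ) < nt := by exact_mod_cast hnt
  have hdiff : Differentiable ℝ
      (fun a : ℝ => a * ∑ k ∈ Finset.range nt, (γ * (1 - a)) ^ k + (γ * (1 - a)) ^ nt) :=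
    fun a => (stmt7_derivB γ nt a).differentiableAt
  apply monotoneOn_of_deriv_nonneg (convex_Icc _ _) hdiff.continuous.continuousOn
    hdiff.differentiableOn
  intro x hx
  rw [interior_Icc] at hx
  rw [(stmt7_derivB γ nt x).deriv]
  set r : ℝ := γ * (1 - x) with hrdef
  have hx0 : 0 ≤ x := le_of_lt hx.1
  have hxle : x ≤ 1 / nt := le_of_lt hx.2
  have hinv : (1 : ℝ) / nt ≤ 1 := by
    rw [div_le_one hntpos]; exact_mod_cast hnt
  have hx1 : x ≤ 1 := hxle.trans hinv
  have hr0 : 0 ≤ r := mul_nonneg hγ0 (by linarith)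
  have hrγ : r ≤ γ := by
    nlinarith
  -- Claim 2 : nt * r^(nt-1) * γ ≤ 1
  have claim2 : (nt : ℝ) * r ^ (nt - 1) * γ ≤ 1 := by
    have h1 : r ^ (nt - 1) ≤ γ ^ (nt - 1) := pow_le_pow_left₀ hr0 hrγ _
    have h2 : γ * γ ^ (nt - 1) = γ ^ nt := by
      rw [← pow_succ']
      congr 1
      omega
    have h3 : (nt : ℝ) * (γ ^ nt) ≤ (nt : ℝ) * (1 / nt) := by
      apply mul_le_mul_of_nonneg_left hγ (le_of_lt hntpos)
    have h4 : (nt : ℝ) * (1 / nt) = 1 := by field_simp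
    have h5 : (nt : ℝ) * r ^ (nt - 1) * γ ≤ (nt : ℝ) * γ ^ (nt - 1) * γ :=
      mul_le_mul_of_nonneg_right (mul_le_mul_of_nonneg_left h1 hntpos.le) hγ0
    have h6 : (nt : ℝ) * γ ^ (nt - 1) * γ = (nt : ℝ) * γ ^ nt := by
      rw [mul_assoc, mul_comm (γ ^ (nt - 1)) γ, h2]
    linarith
  -- Claim 1
  have claim1 : (1 : ℝ) ≤ ∑ k ∈ Finset.range nt, (r ^ k + x * ((k : ℝ) * r ^ (k - 1) * (-γ))) := by
    have hterm : ∀ k ∈ Finset.range nt, 0 ≤ r ^ k + x * ((k : ℝ) * r ^ (k - 1) * (-γ)) := by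
      intro k hk
      rcases Nat.eq_zero_or_pos k with hk0 | hk0
      · subst hk0; simp
      · have hkr : r ^ k = r ^ (k - 1) * r := by
          rw [← pow_succ]
          congr 1
          omega
        have hkle : (k : ℝ) + 1 ≤ nt := by
          have := Finset.mem_range.mp hk
          exact_mod_cast this
        have hxk : x * ((k : ℝ) + 1) ≤ 1 := by
          calc x * ((k : ℝ) + 1) ≤ (1 / nt) * nt := by
                apply mul_le_mul hxle hkle (by positivity) (by positivity)
            _ = 1 := by field_simp
        have hrk1 : 0 ≤ r ^ (k - 1) := pow_nonneg hr0 _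
        rw [hkr, hrdef]
        nlinarith [mul_nonneg (mul_nonneg hγ0 hrk1) (sub_nonneg.mpr hxk)]
    have h0 : (0 : ℕ) ∈ Finset.range nt := Finset.mem_range.mpr hnt
    have := Finset.single_le_sum hterm h0
    simpa using this
  have hsplit : ∑ k ∈ Finset.range nt, (r ^ k + x * ((k : ℝ) * r ^ (k - 1) * (-γ)))
      = 1 * ∑ k ∈ Finset.range nt, r ^ k + x * ∑ k ∈ Finset.range nt, (k : ℝ) * r ^ (k - 1) * (-γ) := by
    rw [Finset.sum_add_distrib, ← Finset.mul_sum, one_mul]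
  rw [hsplit] at claim1
  have : (nt : ℝ) * r ^ (nt - 1) * (-γ) = -((nt : ℝ) * r ^ (nt - 1) * γ) := by ring
  linarith [claim1, claim2, this.ge, this.le]

lemma stmt7_lemA (a : ℝ) (nt : ℕ) (ha0 : 0 ≤ a) (ha1 : a ≤ 1) {g1 g2 : ℝ}
    (hg0 : 0 ≤ g1) (hg : g1 ≤ g2) :
    a * ∑ k ∈ Finset.range nt, (g1 * (1 - a)) ^ k + (g1 * (1 - a)) ^ nt ≤
      a * ∑ k ∈ Finset.range nt, (g2 * (1 - a)) ^ k + (g2 * (1 - a)) ^ nt := by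
  have h0 : 0 ≤ g1 * (1 - a) := mul_nonneg hg0 (by linarith)
  have h1 : g1 * (1 - a) ≤ g2 * (1 - a) := mul_le_mul_of_nonneg_right hg (by linarith)
  exact add_le_add
    (mul_le_mul_of_nonneg_left
      (Finset.sum_le_sum (fun k _ => pow_le_pow_left₀ h0 h1 k)) ha0)
    (pow_le_pow_left₀ h0 h1 nt)

/-- The composite discard probability `τ ↦ δ(α(τ), γ(τ))`, with
`α(τ) = Tτ/(1+Tτ)`, `γ(τ) = l + (1−l)(1 − e^{−12τ})`,
`δ(α,γ) = α^{n_c} ∑_{k<n_t} r^k + r^{n_t}`, `r = γ(1−α^{n_c})`, is monotonically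
nondecreasing on `{τ ≥ 0 : α(τ)^{n_c} ≤ 1/n_t ∧ γ(τ)^{n_t} ≤ 1/n_t}`. -/
theorem stmt7 (T l : ℝ) (hT : 0 < T) (hl : l ∈ Set.Ico (0 : ℝ) 1)
    (nc nt : ℕ) (hnc : 1 ≤ nc) (hnt : 1 ≤ nt) :
    MonotoneOn
      (fun τ : ℝ =>
        (T * τ / (1 + T * τ)) ^ nc *
            (∑ k ∈ Finset.range nt,
              ((l + (1 - l) * (1 - Real.exp (-12 * τ))) *
                (1 - (T * τ / (1 + T * τ)) ^ nc)) ^ k) +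
          ((l + (1 - l) * (1 - Real.exp (-12 * τ))) *
            (1 - (T * τ / (1 + T * τ)) ^ nc)) ^ nt)
      {τ : ℝ | 0 ≤ τ ∧ (T * τ / (1 + T * τ)) ^ nc ≤ 1 / (nt : ℝ) ∧
        (l + (1 - l) * (1 - Real.exp (-12 * τ))) ^ nt ≤ 1 / (nt : ℝ)} := by
  obtain ⟨hl0, hl1⟩ := hl
  intro τ1 h1 τ2 h2 h12
  obtain ⟨hτ1, ha1le, hγ1le⟩ := h1
  obtain ⟨hτ2, ha2le, hγ2le⟩ := h2
  have hd1 : (0 : ℝ) < 1 + T * τ1 := by nlinarith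
  have hd2 : (0 : ℝ) < 1 + T * τ2 := by nlinarith
  have hα10 : 0 ≤ T * τ1 / (1 + T * τ1) := div_nonneg (by nlinarith) hd1.le
  have hα20 : 0 ≤ T * τ2 / (1 + T * τ2) := div_nonneg (by nlinarith) hd2.le
  have hα21 : T * τ2 / (1 + T * τ2) ≤ 1 := by rw [div_le_one hd2]; linarith
  have hαmono : T * τ1 / (1 + T * τ1) ≤ T * τ2 / (1 + T * τ2) := by
    rw [div_le_div_iff₀ hd1 hd2]
    nlinarith
  have ha12 : (T * τ1 / (1 + T * τ1)) ^ nc ≤ (T * τ2 / (1 + T * τ2)) ^ nc :=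
    pow_le_pow_left₀ hα10 hαmono nc
  have ha10 : 0 ≤ (T * τ1 / (1 + T * τ1)) ^ nc := pow_nonneg hα10 nc
  have ha20 : 0 ≤ (T * τ2 / (1 + T * τ2)) ^ nc := pow_nonneg hα20 nc
  have ha21 : (T * τ2 / (1 + T * τ2)) ^ nc ≤ 1 := pow_le_one₀ hα20 hα21
  have hexp1 : Real.exp (-12 * τ1) ≤ 1 := by
    rw [Real.exp_le_one_iff]; linarith
  have hγ10 : 0 ≤ l + (1 - l) * (1 - Real.exp (-12 * τ1)) := by nlinarith
  have hγmono : l + (1 - l) * (1 - Real.exp (-12 * τ1)) ≤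
      l + (1 - l) * (1 - Real.exp (-12 * τ2)) := by
    have h := Real.exp_le_exp.mpr (by linarith : -12 * τ2 ≤ -12 * τ1)
    nlinarith
  have step1 := stmt7_lemB (l + (1 - l) * (1 - Real.exp (-12 * τ1))) nt hnt hγ10 hγ1le
    (Set.mem_Icc.mpr ⟨ha10, ha1le⟩) (Set.mem_Icc.mpr ⟨ha20, ha2le⟩) ha12
  have step2 := stmt7_lemA ((T * τ2 / (1 + T * τ2)) ^ nc) nt ha20 ha21 hγ10 hγmono
  dsimp only
  dsimp only at step1
  exact step1.trans step2
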